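/- A smallest-order argument for centralizers: any differential-reflection operator 𝒟 = Σ a_i(z)(z∂z)^i + Σ b_j(z)(z∂z)^j s (finite sums, coefficients rational in z regular away from z = z^{-1}) that commutes with the Cherednik operator D_k has reflection-part order strictly smaller than its differential-part order (M ≤ N−1), and its leading coefficient a_N satisfies z∂z(a_N) = 0, hence a_N is constant. -/

import Mathlib

open Polynomial

/-- `f : ℂ → ℂ` is (the evaluation of) a Laurent polynomial. -/
def IsLaurent (f : ℂ → ℂ) : Prop :=
  ∃ (p : Polynomial ℂ) (n : ℕ), ∀ z : ℂ, z ≠ 0 → f z = p.eval z / z ^ n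

/-- `g : ℂ → ℂ` is a rational function regular away from `z = 0` and `z = z⁻¹`,
i.e. an element of the localization `ℂ_Δ[z^±]` of `ℂ[z,z⁻¹]` at `Δ = z - z⁻¹`. -/
def IsLocLaurent (g : ℂ → ℂ) : Prop :=
  ∃ (p : Polynomial ℂ) (n m : ℕ), ∀ z : ℂ, z ≠ 0 → z ^ 2 ≠ 1 →
    g z = p.eval z / (z ^ n * (z - z⁻¹) ^ m)

/-- The Euler operator `θ = z∂z`. -/
noncomputable def euler (g : ℂ → ℂ) : ℂ → ℂ := fun z => z * deriv g z

/-- The Cherednik operator `D_k = z∂z + k₁(1-z⁻¹)⁻¹(1-s) + 2k₂(1-z⁻²)⁻¹(1-s) - ρ(k)`. -/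
noncomputable def cherednik (k1 k2 : ℂ) (f : ℂ → ℂ) : ℂ → ℂ := fun z =>
  z * deriv f z + k1 * ((f z - f z⁻¹) / (1 - z⁻¹))
    + 2 * k2 * ((f z - f z⁻¹) / (1 - (z⁻¹) ^ 2)) - (k1 + 2 * k2) / 2 * f z

/-- The differential-reflection operator
`𝒟 = ∑_{i=0}^N aᵢ(z)(z∂z)ⁱ + ∑_{j=0}^M bⱼ(z)(z∂z)ʲ s`. -/
noncomputable def act (a b : ℕ → ℂ → ℂ) (N M : ℕ) (f : ℂ → ℂ) : ℂ → ℂ := fun z =>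
  (∑ i ∈ Finset.range (N + 1), a i z * (euler^[i] f) z)
    + ∑ j ∈ Finset.range (M + 1), b j z * (euler^[j] (fun w => f w⁻¹)) z

namespace S19

def U : Set ℂ := {z | z ≠ 0 ∧ z ^ 2 ≠ 1}

lemma U_open : IsOpen U := by
  have h1 : IsOpen ((fun z : ℂ => z) ⁻¹' {(0:ℂ)}ᶜ) :=
    isOpen_compl_singleton.preimage continuous_id
  have h2 : IsOpen ((fun z : ℂ => z ^ 2) ⁻¹' {(1:ℂ)}ᶜ) :=
    isOpen_compl_singleton.preimage (continuous_pow 2)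
  have : U = (fun z : ℂ => z) ⁻¹' {(0:ℂ)}ᶜ ∩ (fun z : ℂ => z ^ 2) ⁻¹' {(1:ℂ)}ᶜ := by
    ext z; simp [U]
  rw [this]; exact h1.inter h2

lemma mem_U_of_norm {z : ℂ} (hz : 1 < ‖z‖) : z ∈ U := by
  constructor
  · intro h; rw [h] at hz; simp at hz; linarith
  · intro h
    have : ‖z ^ 2‖ = 1 := by rw [h]; simp
    rw [norm_pow] at this
    nlinarith

lemma U_inv {z : ℂ} (hz : z ∈ U) : z⁻¹ ∈ U := by
  refine ⟨inv_ne_zero hz.1, ?_⟩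
  intro h
  apply hz.2
  rw [inv_pow, inv_eq_one] at h
  exact h

lemma sq_sub_one_ne {z : ℂ} (hz : z ∈ U) : z ^ 2 - 1 ≠ 0 := sub_ne_zero.mpr hz.2

lemma den_ne {z : ℂ} (hz : z ∈ U) : z ^ 3 - z ≠ 0 := by
  have : z ^ 3 - z = z * (z ^ 2 - 1) := by ring
  rw [this]
  exact mul_ne_zero hz.1 (sq_sub_one_ne hz)

lemma one_sub_inv_ne {z : ℂ} (hz : z ∈ U) : 1 - z⁻¹ ≠ 0 := by
  intro h
  have h1 : z⁻¹ = 1 := by linear_combination -h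
  have : z = 1 := by rw [← inv_inv z, h1]; simp
  exact hz.2 (by rw [this]; ring)

lemma one_sub_inv_sq_ne {z : ℂ} (hz : z ∈ U) : 1 - (z⁻¹) ^ 2 ≠ 0 := by
  intro h
  have h1 : (z ^ 2)⁻¹ = 1 := by rw [← inv_pow]; linear_combination -h
  apply hz.2
  rw [← inv_inv (z^2), h1]; simp

/-- rational functions regular on `U`. -/
def LL (u : ℂ → ℂ) : Prop :=
  ∃ (p : Polynomial ℂ) (k : ℕ), ∀ z ∈ U, u z = p.eval z / (z ^ 3 - z) ^ k

lemma eventuallyEq_of_eqOn {f g : ℂ → ℂ} (h : ∀ z ∈ U, f z = g z) {z : ℂ} (hz : z ∈ U) :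
    f =ᶠ[nhds z] g :=
  Filter.eventuallyEq_of_mem (U_open.mem_nhds hz) h

lemma rat_differentiableAt (p : Polynomial ℂ) (k : ℕ) {z : ℂ} (hz : z ∈ U) :
    DifferentiableAt ℂ (fun w => p.eval w / (w ^ 3 - w) ^ k) z := by
  apply DifferentiableAt.div (p.differentiableAt)
  · exact (((differentiableAt_pow 3).sub differentiableAt_id).pow k)
  · exact pow_ne_zero _ (den_ne hz)

lemma LL.differentiableAt {u : ℂ → ℂ} (hu : LL u) {z : ℂ} (hz : z ∈ U) :
    DifferentiableAt ℂ u z := by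
  obtain ⟨p, k, hp⟩ := hu
  exact (Filter.EventuallyEq.differentiableAt_iff (eventuallyEq_of_eqOn hp hz)).mpr
    (rat_differentiableAt p k hz)

lemma LL.zero : LL (fun _ => (0:ℂ)) := ⟨0, 0, by simp⟩

lemma LL.add {u v : ℂ → ℂ} (hu : LL u) (hv : LL v) : LL (fun z => u z + v z) := by
  obtain ⟨p, k, hp⟩ := hu; obtain ⟨q, l, hq⟩ := hv
  refine ⟨p * (X^3 - X)^l + q * (X^3 - X)^k, k + l, fun z hz => ?_⟩
  have h := pow_ne_zero k (den_ne hz)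
  have h2 := pow_ne_zero l (den_ne hz)
  show u z + v z = _
  rw [hp z hz, hq z hz, div_add_div _ _ h h2]
  rw [show (z ^ 3 - z) ^ k * (z ^ 3 - z) ^ l = (z ^ 3 - z) ^ (k + l) from (pow_add _ k l).symm]
  congr 1
  simp only [eval_add, eval_mul, eval_pow, eval_sub, eval_X]
  ring

lemma LL.mul_const {u : ℂ → ℂ} (hu : LL u) (c : ℂ) : LL (fun z => u z * c) := by
  obtain ⟨p, k, hp⟩ := hu
  exact ⟨p * C c, k, fun z hz => by show u z * c = _; rw [hp z hz]; simp [div_mul_eq_mul_div]⟩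

lemma LL.neg {u : ℂ → ℂ} (hu : LL u) : LL (fun z => -u z) := by
  have := hu.mul_const (-1)
  convert this using 2 with z
  ring

lemma LL.sum {s : Finset ℕ} {g : ℕ → ℂ → ℂ} (hg : ∀ i ∈ s, LL (g i)) :
    LL (fun z => ∑ i ∈ s, g i z) := by
  classical
  induction s using Finset.induction with
  | empty => simpa using LL.zero
  | @insert x s hx ih =>
    simp only [Finset.sum_insert hx]
    exact (hg x (Finset.mem_insert_self x s)).add
      (ih (fun i hi => hg i (Finset.mem_insert_of_mem hi)))

lemma LL.euler {u : ℂ → ℂ} (hu : LL u) : LL (euler u) := by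
  obtain ⟨p, k, hp⟩ := hu
  refine ⟨X * (derivative p) * (X^3 - X) - (C (k:ℂ)) * p * (C 3 * X^2 - 1) * X, k + 1,
    fun z hz => ?_⟩
  have hden := den_ne hz
  have h1 : HasDerivAt (fun w : ℂ => p.eval w) (eval z (derivative p)) z := p.hasDerivAt z
  have h0 : HasDerivAt (fun w : ℂ => w^3 - w) (3 * z^2 - 1) z := by
    simpa using ((hasDerivAt_pow 3 z).fun_sub (hasDerivAt_id' z))
  have h2 : HasDerivAt (fun w : ℂ => (w^3 - w)^k)
      ((k:ℂ) * (z^3 - z)^(k-1) * (3 * z^2 - 1)) z := h0.pow k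
  have h3 := h1.div h2 (pow_ne_zero k hden)
  have hder : deriv u z = (eval z (derivative p) * (z ^ 3 - z) ^ k -
      eval z p * ((k:ℂ) * (z ^ 3 - z) ^ (k - 1) * (3 * z ^ 2 - 1))) / ((z ^ 3 - z) ^ k) ^ 2 := by
    rw [Filter.EventuallyEq.deriv_eq (eventuallyEq_of_eqOn hp hz)]
    exact h3.deriv
  show z * deriv u z = _
  rw [hder]
  simp only [eval_sub, eval_mul, eval_X, eval_C, eval_pow, eval_add, eval_one,
    Polynomial.eval_ofNat]
  cases k with
  | zero =>
    simp only [pow_zero, Nat.cast_zero, zero_mul, mul_zero, zero_mul, sub_zero, one_pow,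
      div_one, pow_one, Nat.zero_eq]
    rw [eq_div_iff (pow_ne_zero _ hden)]
    ring
  | succ s =>
    have hs : s + 1 - 1 = s := rfl
    rw [hs]
    have hne : (z^3 - z)^s ≠ 0 := pow_ne_zero _ hden
    rw [mul_div_assoc', div_eq_div_iff (pow_ne_zero _ (pow_ne_zero _ hden)) (pow_ne_zero _ hden)]
    push_cast
    ring

end S19
namespace S19

lemma euler_zero : euler (fun _ : ℂ => (0:ℂ)) = fun _ => 0 := by
  funext z; simp [euler]

lemma euler_congrU {f g : ℂ → ℂ} (h : ∀ z ∈ U, f z = g z) :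
    ∀ z ∈ U, euler f z = euler g z := by
  intro z hz
  show z * deriv f z = z * deriv g z
  rw [Filter.EventuallyEq.deriv_eq (eventuallyEq_of_eqOn h hz)]

lemma euler_iter_congrU {f g : ℂ → ℂ} (h : ∀ z ∈ U, f z = g z) :
    ∀ i, ∀ z ∈ U, euler^[i] f z = euler^[i] g z := by
  intro i
  induction i with
  | zero => simpa using h
  | succ i ih =>
    intro z hz
    rw [Function.iterate_succ_apply', Function.iterate_succ_apply']
    exact euler_congrU ih z hz

/-- binomial-type coefficient functions for iterating `θ` against `w^m`. -/
noncomputable def cF (u : ℂ → ℂ) : ℕ → ℕ → ℂ → ℂ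
  | 0, 0 => u
  | 0, _+1 => fun _ => 0
  | i+1, 0 => euler (cF u i 0)
  | i+1, l+1 => fun z => euler (cF u i (l+1)) z + cF u i l z

lemma cF_gt (u : ℂ → ℂ) : ∀ i l, i < l → cF u i l = fun _ => 0 := by
  intro i
  induction i with
  | zero =>
    intro l hl
    match l, hl with
    | l+1, _ => rfl
  | succ i ih =>
    intro l hl
    match l, hl with
    | l+1, hl =>
      show (fun z => euler (cF u i (l+1)) z + cF u i l z) = fun _ => 0
      rw [ih (l+1) (by omega), ih l (by omega), euler_zero]
      funext z; simp

lemma cF_diag (u : ℂ → ℂ) : ∀ i, cF u i i = u := by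
  intro i
  induction i with
  | zero => rfl
  | succ i ih =>
    show (fun z => euler (cF u i (i+1)) z + cF u i i z) = u
    rw [cF_gt u i (i+1) (by omega), ih, euler_zero]
    funext z; simp

lemma cF_LL {u : ℂ → ℂ} (hu : LL u) : ∀ i l, LL (cF u i l) := by
  intro i
  induction i with
  | zero =>
    intro l
    match l with
    | 0 => exact hu
    | l+1 => exact LL.zero
  | succ i ih =>
    intro l
    match l with
    | 0 => exact (ih 0).euler
    | l+1 => exact ((ih (l+1)).euler).add (ih l)

lemma cF_pascal (u : ℂ → ℂ) (i : ℕ) (z : ℂ) (c : ℂ) :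
    ∑ l ∈ Finset.range (i+2), cF u (i+1) l z * c^l
      = ∑ l ∈ Finset.range (i+1), euler (cF u i l) z * c^l
        + c * ∑ l ∈ Finset.range (i+1), cF u i l z * c^l := by
  rw [Finset.sum_range_succ' (fun l => cF u (i+1) l z * c^l) (i+1)]
  have hL : ∀ l ∈ Finset.range (i+1),
      cF u (i+1) (l+1) z * c^(l+1)
        = euler (cF u i (l+1)) z * c^(l+1) + cF u i l z * c^(l+1) := by
    intro l _
    show (euler (cF u i (l+1)) z + cF u i l z) * c^(l+1) = _
    ring
  rw [Finset.sum_congr rfl hL, Finset.sum_add_distrib]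
  have h1 : ∑ l ∈ Finset.range (i+1), euler (cF u i (l+1)) z * c^(l+1)
      = ∑ l ∈ Finset.range i, euler (cF u i (l+1)) z * c^(l+1) := by
    rw [Finset.sum_range_succ]
    rw [cF_gt u i (i+1) (by omega), euler_zero]
    simp
  have h2 : ∑ l ∈ Finset.range (i+1), euler (cF u i l) z * c^l
      = ∑ l ∈ Finset.range i, euler (cF u i (l+1)) z * c^(l+1)
        + euler (cF u i 0) z * c^0 := by
    rw [Finset.sum_range_succ' (fun l => euler (cF u i l) z * c^l) i]
  have h3 : c * ∑ l ∈ Finset.range (i+1), cF u i l z * c^l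
      = ∑ l ∈ Finset.range (i+1), cF u i l z * c^(l+1) := by
    rw [Finset.mul_sum]
    exact Finset.sum_congr rfl fun l _ => by ring
  rw [h1, h2, h3]
  show _ + _ + (cF u (i+1) 0 z) * c^0 = _
  show _ + _ + (euler (cF u i 0) z) * c^0 = _
  ring

/-- The key computation: iterated Euler operator applied to
`(c + u) z^n + (d + v) z^{-n}` with `u, v` rational regular on `U`. -/
lemma euler_iter_pair {u v : ℂ → ℂ} (hu : LL u) (hv : LL v) (c d : ℂ) (n : ℕ) :
    ∀ i, ∀ z ∈ U, euler^[i] (fun w => (c + u w) * w^(n:ℤ) + (d + v w) * w^(-(n:ℤ))) z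
      = (c * (n:ℂ)^i + ∑ l ∈ Finset.range (i+1), cF u i l z * (n:ℂ)^l) * z^(n:ℤ)
        + (d * (-(n:ℂ))^i + ∑ l ∈ Finset.range (i+1), cF v i l z * (-(n:ℂ))^l) * z^(-(n:ℤ)) := by
  intro i
  induction i with
  | zero =>
    intro z hz
    have c1 : cF u 0 0 = u := rfl
    have c2 : cF v 0 0 = v := rfl
    simp only [Function.iterate_zero, id_eq]
    rw [Finset.sum_range_one, Finset.sum_range_one, c1, c2]
    simp only [pow_zero]
    ring
  | succ i ih =>
    intro z hz
    rw [Function.iterate_succ_apply']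
    show z * deriv (euler^[i] _) z = _
    set Φ : ℂ → ℂ := fun w =>
      (c * (n:ℂ)^i + ∑ l ∈ Finset.range (i+1), cF u i l w * (n:ℂ)^l) * w^(n:ℤ)
        + (d * (-(n:ℂ))^i + ∑ l ∈ Finset.range (i+1), cF v i l w * (-(n:ℂ))^l) * w^(-(n:ℤ))
      with hΦ
    have hev : deriv (euler^[i] (fun w => (c + u w) * w^(n:ℤ) + (d + v w) * w^(-(n:ℤ)))) z
        = deriv Φ z :=
      Filter.EventuallyEq.deriv_eq (eventuallyEq_of_eqOn ih hz)
    rw [hev]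
    -- compute deriv Φ z
    have hSu : HasDerivAt (fun w => c * (n:ℂ)^i + ∑ l ∈ Finset.range (i+1), cF u i l w * (n:ℂ)^l)
        (∑ l ∈ Finset.range (i+1), deriv (cF u i l) z * (n:ℂ)^l) z := by
      apply HasDerivAt.const_add
      apply HasDerivAt.fun_sum
      intro l _
      exact ((cF_LL hu i l).differentiableAt hz).hasDerivAt.mul_const _
    have hSv : HasDerivAt (fun w => d * (-(n:ℂ))^i + ∑ l ∈ Finset.range (i+1), cF v i l w * (-(n:ℂ))^l)
        (∑ l ∈ Finset.range (i+1), deriv (cF v i l) z * (-(n:ℂ))^l) z := by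
      apply HasDerivAt.const_add
      apply HasDerivAt.fun_sum
      intro l _
      exact ((cF_LL hv i l).differentiableAt hz).hasDerivAt.mul_const _
    have hz1 : HasDerivAt (fun w : ℂ => w ^ (n:ℤ)) ((n:ℂ) * z ^ ((n:ℤ) - 1)) z := by
      simpa using hasDerivAt_zpow (n:ℤ) z (Or.inl hz.1)
    have hz2 : HasDerivAt (fun w : ℂ => w ^ (-(n:ℤ))) ((-(n:ℂ)) * z ^ (-(n:ℤ) - 1)) z := by
      simpa using hasDerivAt_zpow (-(n:ℤ)) z (Or.inl hz.1)
    have hΦ' : HasDerivAt Φ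
        ((∑ l ∈ Finset.range (i+1), deriv (cF u i l) z * (n:ℂ)^l) * z^(n:ℤ)
          + (c * (n:ℂ)^i + ∑ l ∈ Finset.range (i+1), cF u i l z * (n:ℂ)^l) * ((n:ℂ) * z ^ ((n:ℤ) - 1))
          + ((∑ l ∈ Finset.range (i+1), deriv (cF v i l) z * (-(n:ℂ))^l) * z^(-(n:ℤ))
            + (d * (-(n:ℂ))^i + ∑ l ∈ Finset.range (i+1), cF v i l z * (-(n:ℂ))^l)
              * ((-(n:ℂ)) * z ^ (-(n:ℤ) - 1)))) z := (hSu.mul hz1).add (hSv.mul hz2)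
    rw [hΦ'.deriv]
    have hzp1 : z * z ^ ((n:ℤ) - 1) = z ^ (n:ℤ) := by
      rw [zpow_sub_one₀ hz.1, mul_comm, mul_assoc, inv_mul_cancel₀ hz.1, mul_one]
    have hzp2 : z * z ^ (-(n:ℤ) - 1) = z ^ (-(n:ℤ)) := by
      rw [zpow_sub_one₀ hz.1, mul_comm, mul_assoc, inv_mul_cancel₀ hz.1, mul_one]
    have hP1 := cF_pascal u i z (n:ℂ)
    have hP2 := cF_pascal v i z (-(n:ℂ))
    have heu : ∀ (w : ℂ → ℂ) (cc : ℂ) (s : Finset ℕ) (g : ℕ → ℂ → ℂ),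
        z * ∑ l ∈ s, deriv (g l) z * cc^l = ∑ l ∈ s, euler (g l) z * cc^l := by
      intro w cc s g
      rw [Finset.mul_sum]
      exact Finset.sum_congr rfl fun l _ => by show _ = z * deriv (g l) z * cc ^ l; ring
    have expand : z * ((∑ l ∈ Finset.range (i+1), deriv (cF u i l) z * (n:ℂ)^l) * z^(n:ℤ)
          + (c * (n:ℂ)^i + ∑ l ∈ Finset.range (i+1), cF u i l z * (n:ℂ)^l) * ((n:ℂ) * z ^ ((n:ℤ) - 1))
          + ((∑ l ∈ Finset.range (i+1), deriv (cF v i l) z * (-(n:ℂ))^l) * z^(-(n:ℤ))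
            + (d * (-(n:ℂ))^i + ∑ l ∈ Finset.range (i+1), cF v i l z * (-(n:ℂ))^l)
              * ((-(n:ℂ)) * z ^ (-(n:ℤ) - 1))))
        = ((z * ∑ l ∈ Finset.range (i+1), deriv (cF u i l) z * (n:ℂ)^l)
            + (n:ℂ) * (∑ l ∈ Finset.range (i+1), cF u i l z * (n:ℂ)^l)
            + c * (n:ℂ)^(i+1)) * z^(n:ℤ)
          + ((z * ∑ l ∈ Finset.range (i+1), deriv (cF v i l) z * (-(n:ℂ))^l)
            + (-(n:ℂ)) * (∑ l ∈ Finset.range (i+1), cF v i l z * (-(n:ℂ))^l)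
            + d * (-(n:ℂ))^(i+1)) * z^(-(n:ℤ)) := by
      rw [show ((n:ℂ) * z ^ ((n:ℤ) - 1)) = (n:ℂ) * z ^ ((n:ℤ) - 1) from rfl]
      have e1 : z * ((c * (n:ℂ)^i + ∑ l ∈ Finset.range (i+1), cF u i l z * (n:ℂ)^l) * ((n:ℂ) * z ^ ((n:ℤ) - 1)))
          = (c * (n:ℂ)^i + ∑ l ∈ Finset.range (i+1), cF u i l z * (n:ℂ)^l) * (n:ℂ) * (z * z ^ ((n:ℤ)-1)) := by ring
      have e2 : z * ((d * (-(n:ℂ))^i + ∑ l ∈ Finset.range (i+1), cF v i l z * (-(n:ℂ))^l) * ((-(n:ℂ)) * z ^ (-(n:ℤ) - 1)))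
          = (d * (-(n:ℂ))^i + ∑ l ∈ Finset.range (i+1), cF v i l z * (-(n:ℂ))^l) * (-(n:ℂ)) * (z * z ^ (-(n:ℤ)-1)) := by ring
      rw [mul_add, mul_add, mul_add, e1, e2, hzp1, hzp2]
      ring
    rw [expand, heu (fun _ => 0) (n:ℂ) _ (cF u i), heu (fun _ => 0) (-(n:ℂ)) _ (cF v i)]
    rw [show (i+1+1) = i+2 from rfl]
    rw [hP1, hP2]
    push_cast
    ring

end S19
namespace S19

lemma cF_zero_fun : ∀ i l, cF (fun _ : ℂ => (0:ℂ)) i l = fun _ => 0 := by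
  intro i
  induction i with
  | zero => intro l; match l with
    | 0 => rfl
    | l+1 => rfl
  | succ i ih =>
    intro l
    match l with
    | 0 => show euler _ = _; rw [ih 0, euler_zero]
    | l+1 =>
      show (fun z => euler (cF _ i (l+1)) z + cF _ i l z) = _
      rw [ih (l+1), ih l, euler_zero]
      funext z; simp

lemma euler_iter_pow (n i : ℕ) {z : ℂ} (hz : z ∈ U) :
    euler^[i] (fun w : ℂ => w^n) z = (n:ℂ)^i * z^(n:ℤ) := by
  have h2 := euler_iter_congrU (f := fun w : ℂ => w^n)
    (g := fun w => ((1:ℂ) + (fun _ => (0:ℂ)) w) * w^(n:ℤ) + ((0:ℂ) + (fun _ => (0:ℂ)) w) * w^(-(n:ℤ)))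
    (fun w _ => by simp [zpow_natCast]) i z hz
  rw [h2, euler_iter_pair LL.zero LL.zero 1 0 n i z hz]
  have : ∀ l ∈ Finset.range (i+1), cF (fun _ : ℂ => (0:ℂ)) i l z * (n:ℂ)^l = 0 := by
    intro l _; rw [cF_zero_fun]; simp
  have h3 : ∀ (cc : ℂ), ∑ l ∈ Finset.range (i+1), cF (fun _ : ℂ => (0:ℂ)) i l z * cc^l = 0 := by
    intro cc
    apply Finset.sum_eq_zero
    intro l _; rw [cF_zero_fun]; simp
  rw [h3, h3]
  ring

lemma euler_iter_pow_inv (n i : ℕ) {z : ℂ} (hz : z ∈ U) :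
    euler^[i] (fun w : ℂ => (w⁻¹)^n) z = (-(n:ℂ))^i * z^(-(n:ℤ)) := by
  have hfg : ∀ w : ℂ, (w⁻¹)^n = ((0:ℂ) + (fun _ => (0:ℂ)) w) * w^(n:ℤ) + ((1:ℂ) + (fun _ => (0:ℂ)) w) * w^(-(n:ℤ)) := by
    intro w
    rw [inv_pow, ← zpow_natCast, ← zpow_neg]
    simp
  have h2 := euler_iter_congrU (f := fun w : ℂ => (w⁻¹)^n)
    (g := fun w => ((0:ℂ) + (fun _ => (0:ℂ)) w) * w^(n:ℤ) + ((1:ℂ) + (fun _ => (0:ℂ)) w) * w^(-(n:ℤ)))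
    (fun w _ => hfg w) i z hz
  rw [h2, euler_iter_pair LL.zero LL.zero 0 1 n i z hz]
  have h3 : ∀ (cc : ℂ), ∑ l ∈ Finset.range (i+1), cF (fun _ : ℂ => (0:ℂ)) i l z * cc^l = 0 := by
    intro cc
    apply Finset.sum_eq_zero
    intro l _; rw [cF_zero_fun]; simp
  rw [h3, h3]
  ring

noncomputable def pφ (k1 k2 : ℂ) : ℂ → ℂ := fun z => k1 * (1 - z⁻¹)⁻¹ + 2 * k2 * (1 - (z⁻¹)^2)⁻¹

noncomputable def pψ (k1 k2 : ℂ) : ℂ → ℂ := fun z => pφ k1 k2 z⁻¹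

lemma LL_pφ (k1 k2 : ℂ) : LL (pφ k1 k2) := by
  refine ⟨C (k1 + 2*k2) * X^3 + C k1 * X^2, 1, fun z hz => ?_⟩
  have h1 := one_sub_inv_ne hz
  have h2 := one_sub_inv_sq_ne hz
  have h3 := den_ne hz
  have h0 := hz.1
  have hz1 : z - 1 ≠ 0 := by
    intro h; exact hz.2 (by rw [show z = 1 from by linear_combination h]; ring)
  have hsq : z^2 - 1 ≠ 0 := sq_sub_one_ne hz
  have e1 : (1 - z⁻¹)⁻¹ = z / (z - 1) := by
    rw [show (1:ℂ) - z⁻¹ = (z-1)/z from by field_simp, inv_div]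
  have e2 : (1 - (z⁻¹)^2)⁻¹ = z^2/(z^2-1) := by
    rw [show (1:ℂ) - (z⁻¹)^2 = (z^2-1)/z^2 from by field_simp, inv_div]
  show k1 * (1 - z⁻¹)⁻¹ + 2 * k2 * (1 - (z⁻¹)^2)⁻¹ = _
  rw [e1, e2]
  simp only [eval_add, eval_mul, eval_C, eval_pow, eval_X, pow_one]
  field_simp
  ring

lemma LL_pψ (k1 k2 : ℂ) : LL (pψ k1 k2) := by
  refine ⟨-(C k1) * X^2 - C (k1 + 2*k2) * X, 1, fun z hz => ?_⟩
  have hz1 : z ≠ 1 := fun h => hz.2 (by rw [h]; ring)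
  have h1 : (1:ℂ) - z ≠ 0 := sub_ne_zero.mpr (Ne.symm hz1)
  have h2 : (1:ℂ) - z^2 ≠ 0 := sub_ne_zero.mpr (Ne.symm hz.2)
  have h3 := den_ne hz
  have h0 := hz.1
  show k1 * (1 - (z⁻¹)⁻¹)⁻¹ + 2 * k2 * (1 - ((z⁻¹)⁻¹)^2)⁻¹ = _
  rw [inv_inv]
  simp only [eval_sub, eval_mul, eval_neg, eval_C, eval_pow, eval_X, pow_one]
  rw [eq_div_iff h3]
  linear_combination (-(k1)*z*(1+z)) * inv_mul_cancel₀ h1 + (-2*k2*z) * inv_mul_cancel₀ h2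

lemma LL_of_isLocLaurent {g : ℂ → ℂ}
    (hg : ∃ (p : Polynomial ℂ) (n m : ℕ), ∀ z : ℂ, z ≠ 0 → z ^ 2 ≠ 1 →
      g z = p.eval z / (z ^ n * (z - z⁻¹) ^ m)) : LL g := by
  obtain ⟨p, n, m, hp⟩ := hg
  refine ⟨p * X^(2*m) * (X^2 - 1)^n, n + m, fun z hz => ?_⟩
  have h0 := hz.1
  have hsq := sq_sub_one_ne hz
  have hzz : z - z⁻¹ = (z^2 - 1) / z := by field_simp
  rw [hp z hz.1 hz.2, hzz, div_pow]
  rw [show z^n * ((z^2-1)^m / z^m) = (z^n * (z^2-1)^m) / z^m from by ring]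
  rw [div_div_eq_mul_div]
  rw [show z^3 - z = z * (z^2-1) from by ring, mul_pow]
  simp only [eval_mul, eval_pow, eval_sub, eval_X, eval_one]
  rw [div_eq_div_iff (mul_ne_zero (pow_ne_zero n h0) (pow_ne_zero m hsq))
    (mul_ne_zero (pow_ne_zero _ h0) (pow_ne_zero _ hsq))]
  ring

/-- polynomial with prescribed coefficients -/
noncomputable def polyOf (e : ℕ → ℂ) (K : ℕ) : Polynomial ℂ :=
  ∑ l ∈ Finset.range K, C (e l) * X^l

lemma polyOf_eval (e : ℕ → ℂ) (K : ℕ) (x : ℂ) :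
    (polyOf e K).eval x = ∑ l ∈ Finset.range K, e l * x^l := by
  rw [polyOf, Polynomial.eval_finset_sum]
  exact Finset.sum_congr rfl fun l _ => by simp

lemma polyOf_coeff (e : ℕ → ℂ) (K : ℕ) {l : ℕ} (hl : l < K) :
    (polyOf e K).coeff l = e l := by
  rw [polyOf, Polynomial.finset_sum_coeff]
  rw [Finset.sum_congr rfl (fun x _ => by
    rw [Polynomial.coeff_C_mul, Polynomial.coeff_X_pow, mul_ite, mul_one, mul_zero])]
  rw [Finset.sum_ite_eq (Finset.range K) l e]
  simp [Finset.mem_range.mpr hl]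

lemma coeff_zero_of_eval_zero (K : ℕ) (e : ℕ → ℂ)
    (h : ∀ n : ℕ, ∑ l ∈ Finset.range K, e l * (n:ℂ)^l = 0) : ∀ l, l < K → e l = 0 := by
  have hP0 : polyOf e K = 0 := by
    apply Polynomial.eq_zero_of_infinite_isRoot
    apply Set.infinite_of_injective_forall_mem (f := fun n : ℕ => (n:ℂ)) Nat.cast_injective
    intro n
    show (polyOf e K).IsRoot (n:ℂ)
    rw [Polynomial.IsRoot, polyOf_eval]
    exact h n
  intro l hl
  rw [← polyOf_coeff e K hl, hP0, Polynomial.coeff_zero]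

lemma tendsto_zero_of_poly_geom (f : ℕ → ℂ) (K : ℕ) {r : ℂ} (hr : ‖r‖ < 1) :
    Filter.Tendsto (fun n : ℕ => (∑ l ∈ Finset.range K, f l * (n:ℂ)^l) * r^n)
      Filter.atTop (nhds 0) := by
  have base : ∀ l : ℕ, Filter.Tendsto (fun n : ℕ => (n:ℂ)^l * r^n) Filter.atTop (nhds 0) :=
    fun l => (summable_pow_mul_geometric_of_norm_lt_one l hr).tendsto_atTop_zero
  have h1 : Filter.Tendsto (fun n : ℕ => ∑ l ∈ Finset.range K, f l * ((n:ℂ)^l * r^n))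
      Filter.atTop (nhds 0) := by
    have := tendsto_finset_sum (Finset.range K)
      (fun l _ => ((base l).const_mul (f l)))
    simpa using this
  apply h1.congr
  intro n
  rw [Finset.sum_mul]
  exact Finset.sum_congr rfl fun l _ => by ring

lemma split_zero (z : ℂ) (hz : 1 < ‖z‖) (K : ℕ) (e f : ℕ → ℂ)
    (h : ∀ n : ℕ, (∑ l ∈ Finset.range K, e l * (n:ℂ)^l) * z^(n:ℤ)
      + (∑ l ∈ Finset.range K, f l * (n:ℂ)^l) * z^(-(n:ℤ)) = 0) :
    (∀ l, l < K → e l = 0) ∧ (∀ l, l < K → f l = 0) := by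
  have hz0 : z ≠ 0 := by
    intro h0
    rw [h0] at hz; simp at hz; linarith
  have hw : ‖z⁻¹‖ < 1 := by
    rw [norm_inv]
    exact inv_lt_one_of_one_lt₀ hz
  have hw2 : ‖(z⁻¹)^2‖ < 1 := by
    rw [norm_pow]
    nlinarith [norm_nonneg z⁻¹, norm_inv z ▸ hw]
  have key : ∀ n : ℕ, (∑ l ∈ Finset.range K, e l * (n:ℂ)^l)
      = (∑ l ∈ Finset.range K, (-(f l)) * (n:ℂ)^l) * ((z⁻¹)^2)^n := by
    intro n
    have h1 := h n
    rw [zpow_natCast, zpow_neg, zpow_natCast, ← inv_pow] at h1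
    have hzn : z^n ≠ 0 := pow_ne_zero _ hz0
    have hwz : (z⁻¹)^n * z^n = 1 := by
      rw [← mul_pow, inv_mul_cancel₀ hz0, one_pow]
    have hsq : ((z⁻¹)^2)^n = (z⁻¹)^n * (z⁻¹)^n := by
      rw [← pow_mul, two_mul, pow_add]
    have hnegsum : ∑ l ∈ Finset.range K, (-(f l)) * (n:ℂ)^l
        = -(∑ l ∈ Finset.range K, f l * (n:ℂ)^l) := by
      rw [← Finset.sum_neg_distrib]
      exact Finset.sum_congr rfl fun l _ => by ring
    rw [hnegsum, hsq]
    apply mul_right_cancel₀ hzn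
    linear_combination h1 + (∑ l ∈ Finset.range K, f l * (n:ℂ)^l) * (z⁻¹)^n * hwz
  have htendE : Filter.Tendsto (fun n : ℕ => ∑ l ∈ Finset.range K, e l * (n:ℂ)^l)
      Filter.atTop (nhds 0) :=
    (tendsto_zero_of_poly_geom (fun l => -(f l)) K hw2).congr (fun n => (key n).symm)
  have htendP : Filter.Tendsto (fun n : ℕ => (polyOf e K).eval (n:ℂ)) Filter.atTop (nhds 0) :=
    htendE.congr (fun n => (polyOf_eval e K (n:ℂ)).symm)
  have hP0 : polyOf e K = 0 := by
    by_cases hdeg : 0 < (polyOf e K).degree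
    · exfalso
      have hnormc : Filter.Tendsto (fun n : ℕ => ‖(n:ℂ)‖) Filter.atTop Filter.atTop := by
        simp only [Complex.norm_natCast]
        exact tendsto_natCast_atTop_atTop
      have h2 := Polynomial.tendsto_norm_atTop (polyOf e K) hdeg hnormc
      have h3 : Filter.Tendsto (fun n : ℕ => ‖(polyOf e K).eval (n:ℂ)‖) Filter.atTop (nhds 0) := by
        simpa using htendP.norm
      exact (not_tendsto_atTop_of_tendsto_nhds h3) h2
    · have hc := Polynomial.eq_C_of_degree_le_zero (not_lt.mp hdeg)
      have hcc : (polyOf e K).coeff 0 = 0 := by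
        apply tendsto_nhds_unique (f := fun n : ℕ => (polyOf e K).eval (n:ℂ))
          (l := Filter.atTop) _ htendP
        have : ∀ n : ℕ, (polyOf e K).eval (n:ℂ) = (polyOf e K).coeff 0 := by
          intro n; rw [hc]; simp
        rw [show (fun n : ℕ => (polyOf e K).eval (n:ℂ)) = fun _ => (polyOf e K).coeff 0
          from funext this]
        exact tendsto_const_nhds
      rw [hc, hcc, map_zero]
  have hE0 : ∀ n : ℕ, ∑ l ∈ Finset.range K, e l * (n:ℂ)^l = 0 := by
    intro n; rw [← polyOf_eval, hP0]; simp
  have hF0 : ∀ n : ℕ, ∑ l ∈ Finset.range K, f l * (n:ℂ)^l = 0 := by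
    intro n
    have h1 := h n
    rw [hE0 n, zero_mul, zero_add, mul_eq_zero] at h1
    rcases h1 with h1 | h1
    · exact h1
    · exact absurd h1 (zpow_ne_zero _ hz0)
  exact ⟨coeff_zero_of_eval_zero K e hE0, coeff_zero_of_eval_zero K f hF0⟩

lemma LL.zero_on_U {u : ℂ → ℂ} (hu : LL u) (h : ∀ z, z ∈ U → 1 < ‖z‖ → u z = 0) :
    ∀ z ∈ U, u z = 0 := by
  obtain ⟨p, k, hp⟩ := hu
  have hmem : ∀ m : ℕ, ((m:ℂ) + 2) ∈ U ∧ 1 < ‖(m:ℂ) + 2‖ := by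
    intro m
    have hcast : (m:ℂ) + 2 = ((m + 2 : ℕ) : ℂ) := by push_cast; ring
    have hnorm : 1 < ‖(m:ℂ) + 2‖ := by
      rw [hcast, Complex.norm_natCast]
      have : (2:ℝ) ≤ ((m + 2 : ℕ) : ℝ) := by exact_mod_cast Nat.le_add_left 2 m
      linarith
    exact ⟨mem_U_of_norm hnorm, hnorm⟩
  have hp0 : p = 0 := by
    apply Polynomial.eq_zero_of_infinite_isRoot
    apply Set.infinite_of_injective_forall_mem (f := fun m : ℕ => (m:ℂ) + 2)
    · intro x y hxy
      simp only [add_left_inj] at hxy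
      exact Nat.cast_injective hxy
    · intro m
      obtain ⟨hmU, hmn⟩ := hmem m
      have h1 := h _ hmU hmn
      rw [hp _ hmU] at h1
      have h2 := pow_ne_zero k (den_ne hmU)
      show Polynomial.IsRoot p _
      rw [Polynomial.IsRoot]
      exact (div_eq_zero_iff.mp h1).resolve_right h2
  intro z hz
  rw [hp z hz, hp0]
  simp

end S19
namespace S19

lemma sum_trunc (g : ℕ → ℂ) (c : ℂ) {N K : ℕ} (h : N < K) :
    ∑ l ∈ Finset.range K, (if l ≤ N then g l else 0) * c^l
      = ∑ i ∈ Finset.range (N+1), g i * c^i := by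
  have h1 : ∑ l ∈ Finset.range (N+1), (if l ≤ N then g l else 0) * c^l
      = ∑ l ∈ Finset.range K, (if l ≤ N then g l else 0) * c^l := by
    apply Finset.sum_subset (Finset.range_subset_range.mpr h)
    intro x hx hx2
    rw [if_neg (by simp only [Finset.mem_range] at hx2; omega), zero_mul]
  rw [← h1]
  exact Finset.sum_congr rfl fun l hl => by
    rw [if_pos (by simp only [Finset.mem_range] at hl; omega)]

lemma sum_trunc_shift (g : ℕ → ℂ) (c : ℂ) {M K : ℕ} (h : M + 1 < K) :
    ∑ l ∈ Finset.range K, (if 1 ≤ l ∧ l ≤ M + 1 then g (l-1) else 0) * c^l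
      = ∑ j ∈ Finset.range (M+1), g j * c^(j+1) := by
  have h1 : ∑ l ∈ Finset.range (M+2), (if 1 ≤ l ∧ l ≤ M + 1 then g (l-1) else 0) * c^l
      = ∑ l ∈ Finset.range K, (if 1 ≤ l ∧ l ≤ M + 1 then g (l-1) else 0) * c^l := by
    apply Finset.sum_subset (Finset.range_subset_range.mpr h)
    intro x hx hx2
    rw [if_neg (by simp only [Finset.mem_range] at hx2; omega), zero_mul]
  rw [← h1, Finset.sum_range_succ' (fun l => (if 1 ≤ l ∧ l ≤ M + 1 then g (l-1) else 0) * c^l) (M+1)]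
  have h2 : (if 1 ≤ 0 ∧ 0 ≤ M + 1 then g (0-1) else 0) * c^0 = 0 := by
    rw [if_neg (by omega)]
    simp
  rw [h2, add_zero]
  exact Finset.sum_congr rfl fun l hl => by
    rw [if_pos (by simp only [Finset.mem_range] at hl; omega)]
    simp

lemma sum_swap_pow (g : ℕ → ℂ) (H : ℕ → ℕ → ℂ) {N K : ℕ} (h : N < K)
    (hH : ∀ i l, i < l → H i l = 0) (c : ℂ) :
    ∑ i ∈ Finset.range (N+1), g i * (∑ l ∈ Finset.range (i+1), H i l * c^l)
      = ∑ l ∈ Finset.range K, (∑ i ∈ Finset.range (N+1), g i * H i l) * c^l := by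
  have inner : ∀ i ∈ Finset.range (N+1),
      g i * (∑ l ∈ Finset.range (i+1), H i l * c^l)
        = ∑ l ∈ Finset.range K, g i * H i l * c^l := by
    intro i hi
    have e1 : ∑ l ∈ Finset.range (i+1), H i l * c^l = ∑ l ∈ Finset.range K, H i l * c^l := by
      apply Finset.sum_subset (Finset.range_subset_range.mpr (by simp only [Finset.mem_range] at hi; omega))
      intro x _ hx2
      rw [hH i x (by simp only [Finset.mem_range] at hx2; omega), zero_mul]
    rw [e1, Finset.mul_sum]
    exact Finset.sum_congr rfl fun l _ => by ring
  rw [Finset.sum_congr rfl inner, Finset.sum_comm]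
  exact Finset.sum_congr rfl fun l _ => by rw [Finset.sum_mul]

lemma euler_sum (g : ℕ → ℂ → ℂ) (c : ℕ → ℂ) (s : Finset ℕ) {z : ℂ} (hz : z ∈ U)
    (hg : ∀ i ∈ s, LL (g i)) :
    euler (fun w => ∑ i ∈ s, g i w * c i) z = ∑ i ∈ s, euler (g i) z * c i := by
  have hd : HasDerivAt (fun w => ∑ i ∈ s, g i w * c i) (∑ i ∈ s, deriv (g i) z * c i) z :=
    HasDerivAt.fun_sum (fun i hi => ((hg i hi).differentiableAt hz).hasDerivAt.mul_const _)
  show z * deriv _ z = _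
  rw [hd.deriv, Finset.mul_sum]
  exact Finset.sum_congr rfl fun i _ => by
    show z * (deriv (g i) z * c i) = z * deriv (g i) z * c i
    ring

lemma cherednik_eq (k1 k2 : ℂ) (g : ℂ → ℂ) (z : ℂ) :
    cherednik k1 k2 g z = euler g z + (g z - g z⁻¹) * pφ k1 k2 z - (k1 + 2*k2)/2 * g z := by
  simp only [cherednik, euler, pφ, div_eq_mul_inv]
  ring

lemma inv_pow_zpow (w : ℂ) (n : ℕ) : (w⁻¹)^n = w^(-(n:ℤ)) := by
  rw [inv_pow, ← zpow_natCast, ← zpow_neg]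

lemma inv_zpow_nat (w : ℂ) (n : ℕ) : (w⁻¹)^((n:ℤ)) = w^(-(n:ℤ)) := by
  rw [inv_zpow, ← zpow_neg]

lemma inv_zpow_negnat (w : ℂ) (n : ℕ) : (w⁻¹)^(-(n:ℤ)) = w^((n:ℤ)) := by
  rw [inv_zpow, ← zpow_neg, neg_neg]

end S19
namespace S19

/-- coefficient (in `n^l`) of `z^n` in `[D_k, 𝒟]` applied to `z^n`. -/
noncomputable def eD (k1 k2 : ℂ) (N M : ℕ) (a b : ℕ → ℂ → ℂ) (z : ℂ) (l : ℕ) : ℂ :=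
  (if l ≤ N then euler (a l) z else 0)
  + pφ k1 k2 z * (if l ≤ N then a l z else 0)
  - pφ k1 k2 z * ((-1:ℂ)^l * (if l ≤ M then b l z⁻¹ else 0))
  - (∑ i ∈ Finset.range (N+1), a i z * cF (pφ k1 k2) i l z)
  - (∑ j ∈ Finset.range (M+1), b j z * cF (fun w => -(pψ k1 k2 w)) j l z)

/-- coefficient (in `n^l`) of `z^{-n}`. -/
noncomputable def fD (k1 k2 : ℂ) (N M : ℕ) (a b : ℕ → ℂ → ℂ) (z : ℂ) (l : ℕ) : ℂ :=
  (-1:ℂ)^l * (if l ≤ M then euler (b l) z else 0)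
  + pφ k1 k2 z * ((-1:ℂ)^l * (if l ≤ M then b l z else 0))
  + 2 * ((-1:ℂ)^l * (if 1 ≤ l ∧ l ≤ M + 1 then b (l-1) z else 0))
  - pφ k1 k2 z * (if l ≤ N then a l z⁻¹ else 0)
  - (∑ i ∈ Finset.range (N+1), a i z * (cF (fun w => -(pφ k1 k2 w)) i l z * (-1:ℂ)^l))
  - (∑ j ∈ Finset.range (M+1), b j z * (cF (pψ k1 k2) j l z * (-1:ℂ)^l))

lemma master (k1 k2 : ℂ) (N M : ℕ) (a b : ℕ → ℂ → ℂ)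
    (ha : ∀ i, LL (a i)) (hb : ∀ j, LL (b j))
    (hcomm : ∀ f : ℂ → ℂ, IsLaurent f → ∀ z : ℂ, z ≠ 0 → z ^ 2 ≠ 1 →
      cherednik k1 k2 (act a b N M f) z = act a b N M (cherednik k1 k2 f) z) :
    ∀ z ∈ U, 1 < ‖z‖ → ∀ l, l < N + M + 2 →
      eD k1 k2 N M a b z l = 0 ∧ fD k1 k2 N M a b z l = 0 := by
  intro z hz hznorm
  set K := N + M + 2 with hK
  have hNK : N < K := by omega
  have hMK : M < K := by omega
  have hM1K : M + 1 < K := by omega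
  set φ : ℂ → ℂ := pφ k1 k2 with hφdef
  set ψ : ℂ → ℂ := pψ k1 k2 with hψdef
  set nφ : ℂ → ℂ := fun w => -(pφ k1 k2 w) with hnφdef
  set nψ : ℂ → ℂ := fun w => -(pψ k1 k2 w) with hnψdef
  have hφ : LL φ := LL_pφ k1 k2
  have hψ : LL ψ := LL_pψ k1 k2
  have hnφ : LL nφ := (LL_pφ k1 k2).neg
  have hnψ : LL nψ := (LL_pψ k1 k2).neg
  set ρ : ℂ := (k1 + 2*k2)/2 with hρdef
  -- the master pointwise identity, for every n
  have claim : ∀ n : ℕ,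
      (∑ l ∈ Finset.range K, eD k1 k2 N M a b z l * (n:ℂ)^l) * z^(n:ℤ)
        + (∑ l ∈ Finset.range K, fD k1 k2 N M a b z l * (n:ℂ)^l) * z^(-(n:ℤ)) = 0 := by
    intro n
    set An : ℂ → ℂ := fun w => ∑ i ∈ Finset.range (N+1), a i w * (n:ℂ)^i with hAndef
    set Bn : ℂ → ℂ := fun w => ∑ j ∈ Finset.range (M+1), b j w * (-(n:ℂ))^j with hBndef
    have hAn : LL An := LL.sum (fun i _ => (ha i).mul_const _)
    have hBn : LL Bn := LL.sum (fun j _ => (hb j).mul_const _)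
    -- Step A : act on the monomial
    have hact : ∀ w ∈ U, act a b N M (fun v => v^n) w
        = An w * w^(n:ℤ) + Bn w * w^(-(n:ℤ)) := by
      intro w hw
      show (∑ i ∈ Finset.range (N+1), a i w * (euler^[i] (fun v => v^n)) w)
        + ∑ j ∈ Finset.range (M+1), b j w * (euler^[j] (fun u => (u⁻¹)^n)) w = _
      have h1 : ∀ i ∈ Finset.range (N+1),
          a i w * (euler^[i] (fun v => v^n)) w = (a i w * (n:ℂ)^i) * w^(n:ℤ) := by
        intro i _
        rw [euler_iter_pow n i hw]
        ring
      have h2 : ∀ j ∈ Finset.range (M+1),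
          b j w * (euler^[j] (fun u => (u⁻¹)^n)) w = (b j w * (-(n:ℂ))^j) * w^(-(n:ℤ)) := by
        intro j _
        rw [euler_iter_pow_inv n j hw]
        ring
      rw [Finset.sum_congr rfl h1, Finset.sum_congr rfl h2, ← Finset.sum_mul, ← Finset.sum_mul]
    -- Step B : left-hand side
    have hEuler : euler (act a b N M (fun v => v^n)) z
        = (euler An z + An z * (n:ℂ)) * z^(n:ℤ) + (euler Bn z + Bn z * (-(n:ℂ))) * z^(-(n:ℤ)) := by
      have hshape0 : ∀ w ∈ U, act a b N M (fun v => v^n) w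
          = (fun w => ((0:ℂ) + An w) * w^(n:ℤ) + ((0:ℂ) + Bn w) * w^(-(n:ℤ))) w := by
        intro w hw
        rw [hact w hw]
        ring
      rw [euler_congrU hshape0 z hz]
      have h2 := euler_iter_pair hAn hBn 0 0 n 1 z hz
      rw [Function.iterate_one] at h2
      rw [h2]
      have c10 : cF An 1 0 = euler An := rfl
      have c10' : cF Bn 1 0 = euler Bn := rfl
      have c11 : cF An 1 1 z = An z := by
        show euler (cF An 0 1) z + cF An 0 0 z = An z
        rw [show cF An 0 1 = (fun _ : ℂ => (0:ℂ)) from rfl, euler_zero]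
        show 0 + An z = An z
        ring
      have c11' : cF Bn 1 1 z = Bn z := by
        show euler (cF Bn 0 1) z + cF Bn 0 0 z = Bn z
        rw [show cF Bn 0 1 = (fun _ : ℂ => (0:ℂ)) from rfl, euler_zero]
        show 0 + Bn z = Bn z
        ring
      rw [Finset.sum_range_succ, Finset.sum_range_one, Finset.sum_range_succ, Finset.sum_range_one]
      rw [c10, c10', c11, c11']
      ring
    have hLHS : cherednik k1 k2 (act a b N M (fun v => v^n)) z
        = (euler An z + (n:ℂ) * An z + φ z * An z - φ z * Bn z⁻¹ - ρ * An z) * z^(n:ℤ)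
          + (euler Bn z - (n:ℂ) * Bn z + φ z * Bn z - φ z * An z⁻¹ - ρ * Bn z) * z^(-(n:ℤ)) := by
      rw [cherednik_eq, hEuler, hact z hz, hact z⁻¹ (U_inv hz), inv_zpow_nat, inv_zpow_negnat]
      rw [← hφdef, ← hρdef]
      ring
    -- Step C : right-hand side
    have hchm : ∀ w ∈ U, cherednik k1 k2 (fun v => v^n) w
        = (((n:ℂ) - ρ) + φ w) * w^(n:ℤ) + ((0:ℂ) + nφ w) * w^(-(n:ℤ)) := by
      intro w hw
      rw [cherednik_eq]
      have he : euler (fun v : ℂ => v^n) w = (n:ℂ) * w^(n:ℤ) := by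
        have := euler_iter_pow n 1 hw
        rw [Function.iterate_one] at this
        rw [this, pow_one]
      rw [he]
      show _ + ((w^n - (w⁻¹)^n) * φ w) - ρ * w^n = _
      rw [inv_pow_zpow, ← zpow_natCast w n]
      simp only [hnφdef]
      ring
    have hchminv : ∀ w ∈ U, cherednik k1 k2 (fun v => v^n) w⁻¹
        = ((0:ℂ) + nψ w) * w^(n:ℤ) + (((n:ℂ) - ρ) + ψ w) * w^(-(n:ℤ)) := by
      intro w hw
      rw [hchm w⁻¹ (U_inv hw), inv_zpow_nat, inv_zpow_negnat]
      have hψw : φ w⁻¹ = ψ w := rfl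
      have hnφw : nφ w⁻¹ = nψ w := rfl
      rw [hψw, hnφw]
      ring
    have hRHS : act a b N M (cherednik k1 k2 (fun v => v^n)) z
        = (∑ i ∈ Finset.range (N+1), a i z
              * (((n:ℂ) - ρ) * (n:ℂ)^i + ∑ l ∈ Finset.range (i+1), cF φ i l z * (n:ℂ)^l)
            + ∑ j ∈ Finset.range (M+1), b j z
              * (∑ l ∈ Finset.range (j+1), cF nψ j l z * (n:ℂ)^l)) * z^(n:ℤ)
          + (∑ i ∈ Finset.range (N+1), a i z
              * (∑ l ∈ Finset.range (i+1), cF nφ i l z * (-(n:ℂ))^l)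
            + ∑ j ∈ Finset.range (M+1), b j z
              * (((n:ℂ) - ρ) * (-(n:ℂ))^j + ∑ l ∈ Finset.range (j+1), cF ψ j l z * (-(n:ℂ))^l))
            * z^(-(n:ℤ)) := by
      show (∑ i ∈ Finset.range (N+1), a i z * (euler^[i] (cherednik k1 k2 (fun v => v^n))) z)
        + ∑ j ∈ Finset.range (M+1), b j z
            * (euler^[j] (fun u => cherednik k1 k2 (fun v => v^n) u⁻¹)) z = _
      have h1 : ∀ i ∈ Finset.range (N+1),
          a i z * (euler^[i] (cherednik k1 k2 (fun v => v^n))) z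
            = (a i z * (((n:ℂ) - ρ) * (n:ℂ)^i + ∑ l ∈ Finset.range (i+1), cF φ i l z * (n:ℂ)^l))
                * z^(n:ℤ)
              + (a i z * (∑ l ∈ Finset.range (i+1), cF nφ i l z * (-(n:ℂ))^l)) * z^(-(n:ℤ)) := by
        intro i _
        rw [euler_iter_congrU hchm i z hz, euler_iter_pair hφ hnφ ((n:ℂ) - ρ) 0 n i z hz]
        ring
      have h2 : ∀ j ∈ Finset.range (M+1),
          b j z * (euler^[j] (fun u => cherednik k1 k2 (fun v => v^n) u⁻¹)) z
            = (b j z * (∑ l ∈ Finset.range (j+1), cF nψ j l z * (n:ℂ)^l)) * z^(n:ℤ)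
              + (b j z * (((n:ℂ) - ρ) * (-(n:ℂ))^j
                  + ∑ l ∈ Finset.range (j+1), cF ψ j l z * (-(n:ℂ))^l)) * z^(-(n:ℤ)) := by
        intro j _
        rw [euler_iter_congrU hchminv j z hz, euler_iter_pair hnψ hψ 0 ((n:ℂ) - ρ) n j z hz]
        ring
      rw [Finset.sum_congr rfl h1, Finset.sum_congr rfl h2]
      rw [Finset.sum_add_distrib, Finset.sum_add_distrib, ← Finset.sum_mul, ← Finset.sum_mul,
        ← Finset.sum_mul, ← Finset.sum_mul]
      ring
    -- equate
    have heq := hcomm (fun v => v^n) ⟨X^n, 0, fun w _ => by simp⟩ z hz.1 hz.2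
    rw [hLHS, hRHS] at heq
    -- split off the scalar parts
    have hA1 : ∑ i ∈ Finset.range (N+1), a i z
          * (((n:ℂ) - ρ) * (n:ℂ)^i + ∑ l ∈ Finset.range (i+1), cF φ i l z * (n:ℂ)^l)
        = ((n:ℂ) - ρ) * An z
          + ∑ i ∈ Finset.range (N+1), a i z * (∑ l ∈ Finset.range (i+1), cF φ i l z * (n:ℂ)^l) := by
      rw [show ((n:ℂ) - ρ) * An z
          = ∑ i ∈ Finset.range (N+1), a i z * (((n:ℂ) - ρ) * (n:ℂ)^i) from by
        rw [hAndef, Finset.mul_sum]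
        exact Finset.sum_congr rfl fun i _ => by ring]
      rw [← Finset.sum_add_distrib]
      exact Finset.sum_congr rfl fun i _ => by ring
    have hB1 : ∑ j ∈ Finset.range (M+1), b j z
          * (((n:ℂ) - ρ) * (-(n:ℂ))^j + ∑ l ∈ Finset.range (j+1), cF ψ j l z * (-(n:ℂ))^l)
        = ((n:ℂ) - ρ) * Bn z
          + ∑ j ∈ Finset.range (M+1), b j z * (∑ l ∈ Finset.range (j+1), cF ψ j l z * (-(n:ℂ))^l) := by
      rw [show ((n:ℂ) - ρ) * Bn z
          = ∑ j ∈ Finset.range (M+1), b j z * (((n:ℂ) - ρ) * (-(n:ℂ))^j) from by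
        rw [hBndef, Finset.mul_sum]
        exact Finset.sum_congr rfl fun j _ => by ring]
      rw [← Finset.sum_add_distrib]
      exact Finset.sum_congr rfl fun j _ => by ring
    rw [hA1, hB1] at heq
    -- the `e` side
    have hE : ∑ l ∈ Finset.range K, eD k1 k2 N M a b z l * (n:ℂ)^l
        = (euler An z + φ z * An z - φ z * Bn z⁻¹)
          - (∑ i ∈ Finset.range (N+1), a i z * (∑ l ∈ Finset.range (i+1), cF φ i l z * (n:ℂ)^l))
          - (∑ j ∈ Finset.range (M+1), b j z * (∑ l ∈ Finset.range (j+1), cF nψ j l z * (n:ℂ)^l)) := by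
      have hterm : ∀ l ∈ Finset.range K, eD k1 k2 N M a b z l * (n:ℂ)^l
          = (if l ≤ N then euler (a l) z else 0) * (n:ℂ)^l
            + φ z * ((if l ≤ N then a l z else 0) * (n:ℂ)^l)
            - φ z * ((if l ≤ M then b l z⁻¹ else 0) * (-(n:ℂ))^l)
            - (∑ i ∈ Finset.range (N+1), a i z * cF φ i l z) * (n:ℂ)^l
            - (∑ j ∈ Finset.range (M+1), b j z * cF nψ j l z) * (n:ℂ)^l := by
        intro l _
        rw [eD, neg_pow (n:ℂ) l, ← hφdef, ← hψdef, ← hnψdef]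
        ring
      rw [Finset.sum_congr rfl hterm]
      rw [Finset.sum_sub_distrib, Finset.sum_sub_distrib, Finset.sum_sub_distrib,
        Finset.sum_add_distrib]
      rw [← Finset.mul_sum, ← Finset.mul_sum]
      rw [sum_trunc (fun l => euler (a l) z) (n:ℂ) hNK,
        sum_trunc (fun l => a l z) (n:ℂ) hNK,
        sum_trunc (fun l => b l z⁻¹) (-(n:ℂ)) hMK]
      rw [← sum_swap_pow (fun i => a i z) (fun i l => cF φ i l z) hNK
        (fun i l hil => by show cF φ i l z = 0; rw [cF_gt φ i l hil]) (n:ℂ)]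
      rw [← sum_swap_pow (fun j => b j z) (fun j l => cF nψ j l z) hMK
        (fun j l hjl => by show cF nψ j l z = 0; rw [cF_gt nψ j l hjl]) (n:ℂ)]
      have hEa : euler An z = ∑ i ∈ Finset.range (N+1), euler (a i) z * (n:ℂ)^i := by
        rw [hAndef]
        exact euler_sum a (fun i => (n:ℂ)^i) _ hz (fun i _ => ha i)
      rw [← hEa]
    -- the `f` side
    have hF : ∑ l ∈ Finset.range K, fD k1 k2 N M a b z l * (n:ℂ)^l
        = (euler Bn z - 2 * (n:ℂ) * Bn z + φ z * Bn z - φ z * An z⁻¹)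
          - (∑ i ∈ Finset.range (N+1), a i z * (∑ l ∈ Finset.range (i+1), cF nφ i l z * (-(n:ℂ))^l))
          - (∑ j ∈ Finset.range (M+1), b j z * (∑ l ∈ Finset.range (j+1), cF ψ j l z * (-(n:ℂ))^l)) := by
      have hterm : ∀ l ∈ Finset.range K, fD k1 k2 N M a b z l * (n:ℂ)^l
          = (if l ≤ M then euler (b l) z else 0) * (-(n:ℂ))^l
            + φ z * ((if l ≤ M then b l z else 0) * (-(n:ℂ))^l)
            + 2 * ((if 1 ≤ l ∧ l ≤ M + 1 then b (l-1) z else 0) * (-(n:ℂ))^l)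
            - φ z * ((if l ≤ N then a l z⁻¹ else 0) * (n:ℂ)^l)
            - (∑ i ∈ Finset.range (N+1), a i z * (cF nφ i l z * (-1:ℂ)^l)) * (n:ℂ)^l
            - (∑ j ∈ Finset.range (M+1), b j z * (cF ψ j l z * (-1:ℂ)^l)) * (n:ℂ)^l := by
        intro l _
        rw [fD, neg_pow (n:ℂ) l, ← hφdef, ← hψdef, ← hnφdef]
        ring
      rw [Finset.sum_congr rfl hterm]
      rw [Finset.sum_sub_distrib, Finset.sum_sub_distrib, Finset.sum_sub_distrib,
        Finset.sum_add_distrib, Finset.sum_add_distrib]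
      rw [← Finset.mul_sum, ← Finset.mul_sum, ← Finset.mul_sum]
      rw [sum_trunc (fun l => euler (b l) z) (-(n:ℂ)) hMK,
        sum_trunc (fun l => b l z) (-(n:ℂ)) hMK,
        sum_trunc (fun l => a l z⁻¹) (n:ℂ) hNK,
        sum_trunc_shift (fun j => b j z) (-(n:ℂ)) hM1K]
      have hswap1 : ∑ l ∈ Finset.range K,
          (∑ i ∈ Finset.range (N+1), a i z * (cF nφ i l z * (-1:ℂ)^l)) * (n:ℂ)^l
          = ∑ i ∈ Finset.range (N+1), a i z
              * (∑ l ∈ Finset.range (i+1), cF nφ i l z * (-(n:ℂ))^l) := by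
        rw [← sum_swap_pow (fun i => a i z) (fun i l => cF nφ i l z * (-1:ℂ)^l) hNK
          (fun i l hil => by show cF nφ i l z * (-1:ℂ)^l = 0; rw [cF_gt nφ i l hil]; show (0:ℂ) * _ = 0; ring) (n:ℂ)]
        apply Finset.sum_congr rfl
        intro i _
        congr 1
        apply Finset.sum_congr rfl
        intro l _
        rw [neg_pow (n:ℂ) l]
        ring
      have hswap2 : ∑ l ∈ Finset.range K,
          (∑ j ∈ Finset.range (M+1), b j z * (cF ψ j l z * (-1:ℂ)^l)) * (n:ℂ)^l
          = ∑ j ∈ Finset.range (M+1), b j z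
              * (∑ l ∈ Finset.range (j+1), cF ψ j l z * (-(n:ℂ))^l) := by
        rw [← sum_swap_pow (fun j => b j z) (fun j l => cF ψ j l z * (-1:ℂ)^l) hMK
          (fun j l hjl => by show cF ψ j l z * (-1:ℂ)^l = 0; rw [cF_gt ψ j l hjl]; show (0:ℂ) * _ = 0; ring) (n:ℂ)]
        apply Finset.sum_congr rfl
        intro j _
        congr 1
        apply Finset.sum_congr rfl
        intro l _
        rw [neg_pow (n:ℂ) l]
        ring
      rw [hswap1, hswap2]
      have hEb : euler Bn z = ∑ j ∈ Finset.range (M+1), euler (b j) z * (-(n:ℂ))^j := by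
        rw [hBndef]
        exact euler_sum b (fun j => (-(n:ℂ))^j) _ hz (fun j _ => hb j)
      rw [← hEb]
      have h2n : ∑ j ∈ Finset.range (M+1), b j z * (-(n:ℂ))^(j+1)
          = -((n:ℂ) * Bn z) := by
        rw [hBndef, Finset.mul_sum, ← Finset.sum_neg_distrib]
        exact Finset.sum_congr rfl fun j _ => by
          rw [pow_succ]
          ring
      rw [h2n]
      ring
    rw [hE, hF]
    linear_combination heq
  -- split into coefficients
  intro l hl
  exact ⟨(split_zero z hznorm K _ _ claim).1 l hl, (split_zero z hznorm K _ _ claim).2 l hl⟩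

end S19
namespace S19

lemma b_vanish (k1 k2 : ℂ) (N M : ℕ) (a b : ℕ → ℂ → ℂ)
    (ha : ∀ i, LL (a i)) (hb : ∀ j, LL (b j))
    (hcomm : ∀ f : ℂ → ℂ, IsLaurent f → ∀ z : ℂ, z ≠ 0 → z ^ 2 ≠ 1 →
      cherednik k1 k2 (act a b N M f) z = act a b N M (cherednik k1 k2 f) z) :
    ∀ d, N ≤ d → d ≤ M → ∀ z ∈ U, b d z = 0 := by
  have key := master k1 k2 N M a b ha hb hcomm
  have step : ∀ d, N ≤ d → d ≤ M → (∀ j, d < j → j ≤ M → ∀ w ∈ U, b j w = 0) →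
      ∀ z ∈ U, b d z = 0 := by
    intro d hNd hdM IH
    apply LL.zero_on_U (hb d)
    intro z hz hzn
    have hf := (key z hz hzn (d+1) (by omega)).2
    rw [fD] at hf
    have e1 : (if d+1 ≤ M then euler (b (d+1)) z else 0) = 0 := by
      by_cases hc : d+1 ≤ M
      · rw [if_pos hc]
        have hzero : b (d+1) =ᶠ[nhds z] (fun _ => 0) :=
          Filter.eventuallyEq_of_mem (U_open.mem_nhds hz)
            (fun w hw => IH (d+1) (by omega) hc w hw)
        show z * deriv (b (d+1)) z = 0
        rw [hzero.deriv_eq]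
        simp
      · rw [if_neg hc]
    have e2 : (if d+1 ≤ M then b (d+1) z else 0) = 0 := by
      by_cases hc : d+1 ≤ M
      · rw [if_pos hc]; exact IH (d+1) (by omega) hc z hz
      · rw [if_neg hc]
    have e3 : (if d+1 ≤ N then a (d+1) z⁻¹ else 0) = 0 := by
      rw [if_neg (by omega)]
    have e4 : ∑ i ∈ Finset.range (N+1),
        a i z * (cF (fun w => -(pφ k1 k2 w)) i (d+1) z * (-1:ℂ)^(d+1)) = 0 := by
      apply Finset.sum_eq_zero
      intro i hi
      rw [cF_gt _ i (d+1) (by simp only [Finset.mem_range] at hi; omega)]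
      simp
    have e5 : ∑ j ∈ Finset.range (M+1),
        b j z * (cF (pψ k1 k2) j (d+1) z * (-1:ℂ)^(d+1)) = 0 := by
      apply Finset.sum_eq_zero
      intro j hj
      by_cases hc : j ≤ d
      · rw [cF_gt _ j (d+1) (by omega)]
        simp
      · rw [IH j (by omega) (by simp only [Finset.mem_range] at hj; omega) z hz]
        simp
    rw [e1, e2, e3, e4, e5, if_pos (show 1 ≤ d+1 ∧ d+1 ≤ M+1 from ⟨by omega, by omega⟩)] at hf
    simp only [Nat.add_sub_cancel] at hf
    have h2 : (2:ℂ) * ((-1:ℂ)^(d+1) * b d z) = 0 := by linear_combination hf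
    have h4 : ((-1:ℂ))^(d+1) * b d z = 0 := by
      rcases mul_eq_zero.mp h2 with h | h
      · norm_num at h
      · exact h
    rcases mul_eq_zero.mp h4 with h | h
    · exact absurd h (pow_ne_zero _ (by norm_num))
    · exact h
  suffices h : ∀ t, ∀ d, N ≤ d → d ≤ M → M - d ≤ t → ∀ z ∈ U, b d z = 0 by
    intro d h1 h2
    exact h (M - d) d h1 h2 le_rfl
  intro t
  induction t with
  | zero =>
    intro d h1 h2 h3
    apply step d h1 h2
    intro j hj hjM w hw
    omega
  | succ t iht =>
    intro d h1 h2 h3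
    apply step d h1 h2
    intro j hj hjM w hw
    exact iht j (by omega) hjM (by omega) w hw

lemma aN_euler_zero (k1 k2 : ℂ) (N M : ℕ) (a b : ℕ → ℂ → ℂ)
    (ha : ∀ i, LL (a i)) (hb : ∀ j, LL (b j))
    (hcomm : ∀ f : ℂ → ℂ, IsLaurent f → ∀ z : ℂ, z ≠ 0 → z ^ 2 ≠ 1 →
      cherednik k1 k2 (act a b N M f) z = act a b N M (cherednik k1 k2 f) z) :
    ∀ z ∈ U, euler (a N) z = 0 := by
  have key := master k1 k2 N M a b ha hb hcomm
  have hbv := b_vanish k1 k2 N M a b ha hb hcomm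
  apply LL.zero_on_U (ha N).euler
  intro z hz hzn
  have he := (key z hz hzn N (by omega)).1
  rw [eD] at he
  rw [if_pos (le_refl N), if_pos (le_refl N)] at he
  have t3 : (if N ≤ M then b N z⁻¹ else 0) = 0 := by
    by_cases hc : N ≤ M
    · rw [if_pos hc]; exact hbv N le_rfl hc z⁻¹ (U_inv hz)
    · rw [if_neg hc]
  have t4 : ∑ i ∈ Finset.range (N+1), a i z * cF (pφ k1 k2) i N z
      = a N z * pφ k1 k2 z := by
    rw [Finset.sum_range_succ]
    rw [Finset.sum_eq_zero (fun i hi => by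
      rw [cF_gt _ i N (by simp only [Finset.mem_range] at hi; omega)]
      simp)]
    rw [cF_diag]
    ring
  have t5 : ∑ j ∈ Finset.range (M+1), b j z * cF (fun w => -(pψ k1 k2 w)) j N z = 0 := by
    apply Finset.sum_eq_zero
    intro j hj
    by_cases hc : j < N
    · rw [cF_gt _ j N hc]
      simp
    · rw [hbv j (by omega) (by simp only [Finset.mem_range] at hj; omega) z hz]
      simp
  rw [t3, t4, t5] at he
  linear_combination he

end S19

open S19

/-- If a differential-reflection operator
`𝒟 = ∑_{i≤N} aᵢ(z)(z∂z)ⁱ + ∑_{j≤M} bⱼ(z)(z∂z)ʲ s` with coefficients in `ℂ_Δ[z^±]`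
commutes with the Cherednik operator `D_k`, then every nonzero reflection coefficient `bⱼ`
has `j < N` (so the reflection-part order is at most `N - 1`), and the leading coefficient
`a_N` satisfies `z∂z(a_N) = 0`, hence is constant. -/
theorem stmt19 (k1 k2 : ℂ) (N M : ℕ) (a b : ℕ → ℂ → ℂ)
    (ha : ∀ i, IsLocLaurent (a i)) (hb : ∀ j, IsLocLaurent (b j))
    (haN : ∃ z : ℂ, z ≠ 0 ∧ z ^ 2 ≠ 1 ∧ a N z ≠ 0)
    (hcomm : ∀ f : ℂ → ℂ, IsLaurent f → ∀ z : ℂ, z ≠ 0 → z ^ 2 ≠ 1 →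
      cherednik k1 k2 (act a b N M f) z = act a b N M (cherednik k1 k2 f) z) :
    (∀ j, j ≤ M → (∃ z : ℂ, z ≠ 0 ∧ z ^ 2 ≠ 1 ∧ b j z ≠ 0) → j < N) ∧
    (∀ z : ℂ, z ≠ 0 → z ^ 2 ≠ 1 → z * deriv (a N) z = 0) ∧
    (∃ c : ℂ, ∀ z : ℂ, z ≠ 0 → z ^ 2 ≠ 1 → a N z = c) := by

  have ha' : ∀ i, LL (a i) := fun i => LL_of_isLocLaurent (ha i)
  have hb' : ∀ j, LL (b j) := fun j => LL_of_isLocLaurent (hb j)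
  have hbv := b_vanish k1 k2 N M a b ha' hb' hcomm
  have haNz := aN_euler_zero k1 k2 N M a b ha' hb' hcomm
  refine ⟨?_, ?_, ?_⟩
  · intro j hjM hex
    obtain ⟨z, hz0, hz1, hbz⟩ := hex
    by_contra hc
    push_neg at hc
    exact hbz (hbv j hc hjM z ⟨hz0, hz1⟩)
  · intro z hz0 hz1
    exact haNz z ⟨hz0, hz1⟩
  · -- constancy of a_N on the connected region U
    have hUconn : IsPreconnected U := by
      have hset : U = ({0, 1, -1} : Set ℂ)ᶜ := by
        ext z
        have hfac : z^2 = 1 ↔ (z = 1 ∨ z = -1) := by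
          constructor
          · intro h
            have h2 : (z - 1) * (z + 1) = 0 := by linear_combination h
            rcases mul_eq_zero.mp h2 with h | h
            · left; linear_combination h
            · right; linear_combination h
          · rintro (h | h) <;> rw [h] <;> ring
        simp only [Set.mem_compl_iff, Set.mem_insert_iff, Set.mem_singleton_iff]
        constructor
        · rintro ⟨h0, h1⟩
          push_neg
          exact ⟨h0, fun hz1 => h1 (hfac.mpr (Or.inl hz1)),
            fun hz1 => h1 (hfac.mpr (Or.inr hz1))⟩
        · intro h
          push_neg at h
          exact ⟨h.1, fun hsq => by
            rcases hfac.mp hsq with h1 | h1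
            exacts [h.2.1 h1, h.2.2 h1]⟩
      rw [hset]
      have hcnt : ({0, 1, -1} : Set ℂ).Countable := by
        apply Set.Countable.insert
        apply Set.Countable.insert
        exact Set.countable_singleton _
      have hrank : 1 < Module.rank ℝ ℂ := by
        rw [Complex.rank_real_complex]
        norm_num
      exact (hcnt.isPathConnected_compl_of_one_lt_rank hrank).isConnected.isPreconnected
    have h2U : (2:ℂ) ∈ U := by
      constructor
      · norm_num
      · norm_num
    have hAnal : AnalyticOnNhd ℂ (a N) U := by
      have hdo : DifferentiableOn ℂ (a N) U :=
        fun w hw => ((ha' N).differentiableAt hw).differentiableWithinAt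
      exact hdo.analyticOnNhd U_open
    have hderiv0 : ∀ w ∈ U, deriv (a N) w = 0 := by
      intro w hw
      have h0 : w * deriv (a N) w = 0 := haNz w hw
      rcases mul_eq_zero.mp h0 with h | h
      · exact absurd h hw.1
      · exact h
    obtain ⟨ε, hε, hball⟩ := Metric.isOpen_iff.mp U_open 2 h2U
    have hballconst : ∀ y ∈ Metric.ball (2:ℂ) ε, a N y = a N 2 := by
      intro y hy
      apply Convex.is_const_of_fderivWithin_eq_zero (convex_ball (2:ℂ) ε)
        (fun w hw => ((ha' N).differentiableAt (hball hw)).differentiableWithinAt)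
        ?_ hy (Metric.mem_ball_self hε)
      intro w hw
      rw [fderivWithin_of_isOpen Metric.isOpen_ball hw]
      have hder : deriv (a N) w = 0 := hderiv0 w (hball hw)
      apply ContinuousLinearMap.ext
      intro c
      have h1 : fderiv ℂ (a N) w 1 = deriv (a N) w := rfl
      have h2 : fderiv ℂ (a N) w c = c • fderiv ℂ (a N) w 1 := by
        rw [← (fderiv ℂ (a N) w).map_smul]
        congr 1
        simp
      rw [h2, h1, hder, smul_zero]
      simp
    have hev : a N =ᶠ[nhds 2] (fun _ => a N 2) :=
      Filter.eventuallyEq_of_mem (Metric.ball_mem_nhds 2 hε) hballconst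
    have heqon := hAnal.eqOn_of_preconnected_of_eventuallyEq analyticOnNhd_const hUconn h2U hev
    exact ⟨a N 2, fun z hz0 hz1 => heqon ⟨hz0, hz1⟩⟩
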